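/- Plancherel identity for the discrete-time SAFT: if c : ℤ → ℂ is absolutely summable, then ∫_0^Δ |Ĉ_A(ω)|² dω = Σ_{k∈ℤ} |c k|². -/

import Mathlib

open MeasureTheory Real
open scoped ENNReal NNReal

noncomputable def dtSAFT (a b d p q : ℝ) (c : ℤ → ℂ) (ω : ℝ) : ℂ :=
  (Real.sqrt (2 * π * b) : ℂ)⁻¹ *
    ∑' k : ℤ, c k * Complex.exp (Complex.I / (2 * b) *
      ((a * (k : ℝ) ^ 2 + d * ω ^ 2 - 2 * (k : ℝ) * ω + 2 * (b * q - d * p) * ω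
        + 2 * p * (k : ℝ) : ℝ) : ℂ))

/-- Plancherel identity for the discrete-time SAFT over one period `[0, Δ]`, `Δ = 2πb`. -/
theorem dtSAFT_plancherel (a b c d p q : ℝ) (hb : 0 < b) (habcd : a * d - b * c = 1)
    (cseq : ℤ → ℂ) (hc : Summable fun k : ℤ => ‖cseq k‖) :
    (∫ ω in (0:ℝ)..(2 * π * b), ‖dtSAFT a b d p q cseq ω‖ ^ 2) =
      ∑' k : ℤ, ‖cseq k‖ ^ 2 := by
  have hbne : (b:ℂ) ≠ 0 := Complex.ofReal_ne_zero.mpr hb.ne'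
  set Δ : ℝ := 2 * π * b with hΔdef
  have hΔpos : 0 < Δ := by positivity
  set R : ℤ → ℝ → ℝ := fun k ω =>
    a * (k : ℝ) ^ 2 + d * ω ^ 2 - 2 * (k : ℝ) * ω + 2 * (b * q - d * p) * ω + 2 * p * (k : ℝ)
    with hRdef
  set F : ℤ → ℝ → ℂ := fun k ω =>
    cseq k * Complex.exp (Complex.I / (2 * b) * ((R k ω : ℝ) : ℂ)) with hFdef
  -- norm of each term
  have hFnorm : ∀ (k : ℤ) (ω : ℝ), ‖F k ω‖ = ‖cseq k‖ := by
    intro k ω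
    have h1 : Complex.I / (2 * b) * ((R k ω : ℝ) : ℂ) = ((R k ω / (2 * b) : ℝ) : ℂ) * Complex.I := by
      push_cast
      field_simp
    rw [hFdef]
    simp only [norm_mul, h1]
    rw [Complex.norm_exp_ofReal_mul_I, mul_one]
  have hFcont : ∀ k : ℤ, Continuous (F k) := by
    intro k
    apply continuous_const.mul
    exact Complex.continuous_exp.comp (continuous_const.mul (Complex.continuous_ofReal.comp (by fun_prop)))
  set S : ℝ → ℂ := fun ω => ∑' k : ℤ, F k ω with hSdef
  have hScont : Continuous S := continuous_tsum hFcont hc fun k ω => (hFnorm k ω).le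
  -- key exponent computation
  set G : ℤ × ℤ → ℂ := fun jk =>
    (starRingEnd ℂ) (cseq jk.1) * cseq jk.2 *
      Complex.exp (Complex.I / (2 * b) *
        ((a * ((jk.2 : ℝ) ^ 2 - (jk.1 : ℝ) ^ 2) + 2 * p * ((jk.2 : ℝ) - (jk.1 : ℝ)) : ℝ) : ℂ))
    with hGdef
  have hexp : ∀ (j k : ℤ) (ω : ℝ),
      (starRingEnd ℂ) (F j ω) * F k ω =
        G (j, k) * Complex.exp (-(Complex.I * ((k : ℂ) - (j : ℂ))) / b * ω) := by
    intro j k ω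
    rw [hFdef, hGdef]
    simp only [map_mul, ← Complex.exp_conj, map_div₀, Complex.conj_I, Complex.conj_ofReal,
      map_ofNat]
    rw [mul_mul_mul_comm, mul_assoc ((starRingEnd ℂ) (cseq j) * cseq k), ← Complex.exp_add,
      ← Complex.exp_add]
    congr 1
    rw [hRdef]
    push_cast
    field_simp
    ring
  -- single integral
  have hint : ∀ m : ℤ, (∫ ω in (0:ℝ)..Δ, Complex.exp (-(Complex.I * (m : ℂ)) / b * ω)) =
      if m = 0 then (Δ : ℂ) else 0 := by
    intro m
    by_cases hm : m = 0
    · subst hm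
      simp
    · rw [if_neg hm]
      have hc0 : -(Complex.I * (m : ℂ)) / b ≠ 0 := by
        apply div_ne_zero _ hbne
        simp [Complex.I_ne_zero, Int.cast_ne_zero, hm]
      rw [integral_exp_mul_complex hc0]
      have h1 : -(Complex.I * (m : ℂ)) / b * (Δ : ℝ) = ((-m : ℤ) : ℂ) * (2 * (π : ℂ) * Complex.I) := by
        rw [hΔdef]
        push_cast
        field_simp
      rw [h1, Complex.exp_int_mul_two_pi_mul_I]
      simp
  -- per term integral
  have hterm : ∀ jk : ℤ × ℤ,
      (∫ ω in (0:ℝ)..Δ, (starRingEnd ℂ) (F jk.1 ω) * F jk.2 ω) =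
        if jk.2 = jk.1 then (starRingEnd ℂ) (cseq jk.1) * cseq jk.1 * (Δ : ℂ) else 0 := by
    rintro ⟨j, k⟩
    simp only [hexp j k]
    rw [intervalIntegral.integral_const_mul]
    have : (fun ω : ℝ => Complex.exp (-(Complex.I * ((k : ℂ) - (j : ℂ))) / b * ω)) =
        fun ω : ℝ => Complex.exp (-(Complex.I * ((k - j : ℤ) : ℂ)) / b * ω) := by
      funext ω
      congr 1
      push_cast
      ring
    rw [show (∫ ω in (0:ℝ)..Δ, Complex.exp (-(Complex.I * ((k : ℂ) - (j : ℂ))) / b * ω)) =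
        ∫ ω in (0:ℝ)..Δ, Complex.exp (-(Complex.I * ((k - j : ℤ) : ℂ)) / b * ω) by
      rw [this], hint (k - j)]
    by_cases hjk : k = j
    · subst hjk
      simp [hGdef]
    · rw [if_neg (sub_ne_zero.mpr (by exact_mod_cast hjk)), if_neg hjk, mul_zero]
  -- double-term function
  set T : ℤ × ℤ → ℝ → ℂ := fun jk ω => (starRingEnd ℂ) (F jk.1 ω) * F jk.2 ω with hTdef
  have hTcont : ∀ jk : ℤ × ℤ, Continuous (T jk) := fun jk =>
    (continuous_star.comp (hFcont jk.1)).mul (hFcont jk.2)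
  have hTnorm : ∀ (jk : ℤ × ℤ) (ω : ℝ), ‖T jk ω‖ = ‖cseq jk.1‖ * ‖cseq jk.2‖ := by
    intro jk ω
    rw [hTdef]
    simp only [norm_mul, starRingEnd_apply, norm_star, hFnorm]
  have hc' : Summable fun k : ℤ => ‖cseq k‖₊ :=
    NNReal.summable_coe.mp (by simpa [coe_nnnorm] using hc)
  have hK : (∑' k : ℤ, (‖cseq k‖₊ : ℝ≥0∞)) ≠ ⊤ :=
    ENNReal.tsum_coe_ne_top_iff_summable.mpr hc'
  have h_lint : (∑' jk : ℤ × ℤ, ∫⁻ ω, ‖T jk ω‖₊ ∂(volume.restrict (Set.Ioc (0:ℝ) Δ))) ≠ ⊤ := by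
    have heach : ∀ jk : ℤ × ℤ, (∫⁻ ω, ‖T jk ω‖₊ ∂(volume.restrict (Set.Ioc (0:ℝ) Δ)))
        = (‖cseq jk.1‖₊ : ℝ≥0∞) * (‖cseq jk.2‖₊ : ℝ≥0∞) * ENNReal.ofReal Δ := by
      intro jk
      have h1 : ∀ ω : ℝ, (‖T jk ω‖₊ : ℝ≥0∞) = (‖cseq jk.1‖₊ : ℝ≥0∞) * (‖cseq jk.2‖₊ : ℝ≥0∞) := by
        intro ω
        rw [← ENNReal.coe_mul]
        congr 1
        ext
        push_cast
        exact hTnorm jk ω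
      rw [lintegral_congr h1, lintegral_const, Measure.restrict_apply_univ, Real.volume_Ioc,
        sub_zero]
    rw [tsum_congr heach]
    have h2 : (∑' jk : ℤ × ℤ, (‖cseq jk.1‖₊ : ℝ≥0∞) * (‖cseq jk.2‖₊ : ℝ≥0∞) * ENNReal.ofReal Δ)
        = (∑' j : ℤ, (‖cseq j‖₊ : ℝ≥0∞)) * (∑' k : ℤ, (‖cseq k‖₊ : ℝ≥0∞)) * ENNReal.ofReal Δ := by
      rw [ENNReal.tsum_mul_right, ENNReal.tsum_prod']
      congr 1
      simp_rw [ENNReal.tsum_mul_left]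
      rw [ENNReal.tsum_mul_right]
    rw [h2]
    exact ENNReal.mul_ne_top (ENNReal.mul_ne_top hK hK) ENNReal.ofReal_ne_top
  -- main complex-valued integral identity
  have hmain : (∫ ω in Set.Ioc (0:ℝ) Δ, (starRingEnd ℂ) (S ω) * S ω)
      = ∑' k : ℤ, (starRingEnd ℂ) (cseq k) * cseq k * (Δ : ℂ) := by
    have hpt : ∀ ω : ℝ, (starRingEnd ℂ) (S ω) * S ω = ∑' jk : ℤ × ℤ, T jk ω := by
      intro ω
      rw [hSdef]
      simp only
      rw [starRingEnd_apply, tsum_star]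
      have h1 : Summable fun j : ℤ => ‖star (F j ω)‖ := by
        simpa [norm_star, hFnorm] using hc
      have h2 : Summable fun k : ℤ => ‖F k ω‖ := by simpa [hFnorm] using hc
      rw [tsum_mul_tsum_of_summable_norm h1 h2]
      exact tsum_congr fun jk => by rw [← starRingEnd_apply]
    calc (∫ ω in Set.Ioc (0:ℝ) Δ, (starRingEnd ℂ) (S ω) * S ω)
        = ∫ ω in Set.Ioc (0:ℝ) Δ, ∑' jk : ℤ × ℤ, T jk ω := by
          exact integral_congr_ae (Filter.Eventually.of_forall fun ω => hpt ω)
      _ = ∑' jk : ℤ × ℤ, ∫ ω in Set.Ioc (0:ℝ) Δ, T jk ω :=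
          integral_tsum (fun jk => (hTcont jk).aestronglyMeasurable) h_lint
      _ = ∑' jk : ℤ × ℤ, (if jk.2 = jk.1 then
            (starRingEnd ℂ) (cseq jk.1) * cseq jk.1 * (Δ : ℂ) else 0) := by
          refine tsum_congr fun jk => ?_
          rw [← intervalIntegral.integral_of_le hΔpos.le]
          exact hterm jk
      _ = ∑' k : ℤ, (starRingEnd ℂ) (cseq k) * cseq k * (Δ : ℂ) := by
          have hinj : Function.Injective (fun k : ℤ => ((k, k) : ℤ × ℤ)) := by
            intro x y h
            exact congrArg Prod.fst h
          have hsupp : Function.support (fun jk : ℤ × ℤ => (if jk.2 = jk.1 then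
              (starRingEnd ℂ) (cseq jk.1) * cseq jk.1 * (Δ : ℂ) else 0))
              ⊆ Set.range (fun k : ℤ => ((k, k) : ℤ × ℤ)) := by
            rintro ⟨j, k⟩ h
            simp only [Function.mem_support] at h
            by_cases hkj : k = j
            · exact ⟨j, by simp [hkj]⟩
            · simp [hkj] at h
          rw [← Function.Injective.tsum_eq hinj hsupp]
          simp
  -- pointwise reduction of the squared norm
  have hS_sq : ∀ ω : ℝ, ‖dtSAFT a b d p q cseq ω‖ ^ 2
      = Δ⁻¹ * ((starRingEnd ℂ) (S ω) * S ω).re := by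
    intro ω
    have hd : dtSAFT a b d p q cseq ω = ((Real.sqrt Δ : ℝ) : ℂ)⁻¹ * S ω := rfl
    have hre : ((starRingEnd ℂ) (S ω) * S ω).re = ‖S ω‖ ^ 2 := by
      rw [mul_comm, Complex.mul_conj, Complex.ofReal_re, Complex.sq_norm]
    rw [hd, norm_mul, mul_pow, hre]
    congr 1
    rw [norm_inv, Complex.norm_real, Real.norm_eq_abs, abs_of_nonneg (Real.sqrt_nonneg _),
      inv_pow, Real.sq_sqrt hΔpos.le]
  -- integrability of |S|^2 over the interval
  have hInt : Integrable (fun ω => (starRingEnd ℂ) (S ω) * S ω)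
      (volume.restrict (Set.Ioc (0:ℝ) Δ)) :=
    ((continuous_star.comp hScont).mul hScont).integrableOn_Ioc
  have hsum_sq : Summable fun k : ℤ => ‖cseq k‖ ^ 2 := by
    have h0 : Filter.Tendsto (fun k : ℤ => ‖cseq k‖) Filter.cofinite (nhds 0) :=
      hc.tendsto_cofinite_zero
    have hev : ∀ᶠ k in Filter.cofinite, ‖‖cseq k‖ ^ 2‖ ≤ ‖cseq k‖ := by
      filter_upwards [h0.eventually (gt_mem_nhds (by norm_num : (0:ℝ) < 1))] with k hk
      rw [Real.norm_eq_abs, abs_of_nonneg (by positivity), sq]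
      exact mul_le_of_le_one_left (norm_nonneg _) hk.le
    exact hc.of_norm_bounded_eventually hev
  have hterm2 : ∀ k : ℤ, (starRingEnd ℂ) (cseq k) * cseq k * (Δ : ℂ)
      = ((‖cseq k‖ ^ 2 * Δ : ℝ) : ℂ) := by
    intro k
    rw [mul_comm ((starRingEnd ℂ) (cseq k)) (cseq k), Complex.mul_conj,
      show ‖cseq k‖ ^ 2 = Complex.normSq (cseq k) by rw [Complex.sq_norm]]
    push_cast
    ring
  calc (∫ ω in (0:ℝ)..Δ, ‖dtSAFT a b d p q cseq ω‖ ^ 2)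
      = ∫ ω in (0:ℝ)..Δ, Δ⁻¹ * ((starRingEnd ℂ) (S ω) * S ω).re := by
        exact intervalIntegral.integral_congr fun ω _ => hS_sq ω
    _ = Δ⁻¹ * ∫ ω in (0:ℝ)..Δ, ((starRingEnd ℂ) (S ω) * S ω).re :=
        intervalIntegral.integral_const_mul _ _
    _ = Δ⁻¹ * ∫ ω in Set.Ioc (0:ℝ) Δ, ((starRingEnd ℂ) (S ω) * S ω).re := by
        rw [intervalIntegral.integral_of_le hΔpos.le]
    _ = Δ⁻¹ * (∫ ω in Set.Ioc (0:ℝ) Δ, (starRingEnd ℂ) (S ω) * S ω).re := by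
        congr 1
        have := integral_re (μ := volume.restrict (Set.Ioc (0:ℝ) Δ)) hInt
        simpa [RCLike.re_to_complex] using this
    _ = Δ⁻¹ * (∑' k : ℤ, (starRingEnd ℂ) (cseq k) * cseq k * (Δ : ℂ)).re := by rw [hmain]
    _ = Δ⁻¹ * ((∑' k : ℤ, ‖cseq k‖ ^ 2) * Δ) := by
        rw [tsum_congr hterm2, ← Complex.ofReal_tsum, Complex.ofReal_re, tsum_mul_right]
    _ = ∑' k : ℤ, ‖cseq k‖ ^ 2 := by
        rw [mul_comm (∑' k : ℤ, ‖cseq k‖ ^ 2) Δ, ← mul_assoc, inv_mul_cancel₀ hΔpos.ne',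
          one_mul]
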